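/- Let M be an n × 2^t complex matrix of rank 2^r admitting a full rank matchgate realizer, meaning there is a matrix A with rank(A·M) = 2^r, and suppose invertible matrices B, C put A·M into canonical form: every nonzero column of B·A·M·C has column index (a t-bit string) whose last t−r bits are all 1. Then every nonzero column of M·C likewise has index whose last t−r bits all equal 1, and the n × 2^r matrix N obtained from M·C by keeping only the columns whose last t−r bits are 1 satisfies rank(N) = 2^r. -/

import Mathlib

/-- Restrict a matrix with columns indexed by length-`t` bit strings to the columns
whose last `t - r` bits are all `true`. -/
def collapseCols (n t r : ℕ) (M : Matrix (Fin n) (Fin t → Bool) ℂ) :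
    Matrix (Fin n) (Fin r → Bool) ℂ :=
  fun x z => M x (fun i => if h : (i : ℕ) < r then z ⟨i, h⟩ else true)

theorem base_collapse (n t r m : ℕ) (hr : r ≤ t)
    (M : Matrix (Fin n) (Fin t → Bool) ℂ)
    (A : Matrix (Fin m) (Fin n) ℂ)
    (B : Matrix (Fin m) (Fin m) ℂ)
    (C : Matrix (Fin t → Bool) (Fin t → Bool) ℂ)
    (hMrank : M.rank = 2 ^ r) (hAMrank : (A * M).rank = 2 ^ r)
    (hB : IsUnit B) (hC : IsUnit C)
    (hcanon : ∀ (x : Fin m) (y : Fin t → Bool), (B * (A * M) * C) x y ≠ 0 →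
      ∀ i : Fin t, r ≤ (i : ℕ) → y i = true) :
    (∀ (x : Fin n) (y : Fin t → Bool), (M * C) x y ≠ 0 →
      ∀ i : Fin t, r ≤ (i : ℕ) → y i = true) ∧
    (collapseCols n t r (M * C)).rank = 2 ^ r := by
  classical
  -- A is injective on the column space of M
  set f := A.mulVecLin with hf
  set p := LinearMap.range M.mulVecLin with hp
  have hcomp : (A * M).mulVecLin = f.comp M.mulVecLin := Matrix.mulVecLin_mul A M
  have hmap : LinearMap.range (A * M).mulVecLin = p.map f := by
    rw [hcomp, LinearMap.range_comp, hp]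
  have hfr : Module.finrank ℂ (p.map f) = Module.finrank ℂ p := by
    have h1 : Module.finrank ℂ (p.map f) = 2 ^ r := by
      rw [← hmap]; exact hAMrank
    have h2 : Module.finrank ℂ p = 2 ^ r := hMrank
    rw [h1, h2]
  have hinj : ∀ v ∈ p, A.mulVec v = 0 → v = 0 := by
    intro v hv hAv
    have hrange : LinearMap.range (f.comp p.subtype) = p.map f := by
      rw [LinearMap.range_comp, Submodule.range_subtype]
    have hrn := LinearMap.finrank_range_add_finrank_ker (f.comp p.subtype)
    rw [hrange, hfr] at hrn
    have hker0 : Module.finrank ℂ (LinearMap.ker (f.comp p.subtype)) = 0 := by omega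
    have hkerbot : LinearMap.ker (f.comp p.subtype) = ⊥ :=
      Submodule.finrank_eq_zero.mp hker0
    have : (⟨v, hv⟩ : p) ∈ LinearMap.ker (f.comp p.subtype) := by
      simp [LinearMap.mem_ker, hf, hAv]
    rw [hkerbot, Submodule.mem_bot] at this
    exact congrArg Subtype.val this
  -- main support claim
  have hsupp : ∀ (x : Fin n) (y : Fin t → Bool), (M * C) x y ≠ 0 →
      ∀ i : Fin t, r ≤ (i : ℕ) → y i = true := by
    intro x y hxy i hi
    by_contra hbad
    -- the y-column of B*(A*M)*C is zero
    have hBcol : ∀ k, (B * (A * M) * C) k y = 0 := by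
      intro k
      by_contra hk
      exact hbad (hcanon k y hk i hi)
    -- hence the y-column of (A*M)*C is zero
    have hAMC : ∀ k, ((A * M) * C) k y = 0 := by
      intro k
      obtain ⟨u, hu⟩ := hB
      have : (A * M) * C = (↑u⁻¹ : Matrix (Fin m) (Fin m) ℂ) * (B * ((A * M) * C)) := by
        rw [← Matrix.mul_assoc, ← hu, ← Units.val_mul, inv_mul_cancel, Units.val_one,
          Matrix.one_mul]
      rw [this, Matrix.mul_apply]
      apply Finset.sum_eq_zero
      intro j _
      have : (B * ((A * M) * C)) j y = 0 := by
        rw [← Matrix.mul_assoc]; exact hBcol j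
      rw [this, mul_zero]
    -- the y-column of M*C is in p and killed by A
    set v : Fin n → ℂ := fun x' => (M * C) x' y with hv
    have hvp : v ∈ p := by
      refine ⟨fun z => C z y, ?_⟩
      funext x'
      simp [hv, Matrix.mulVecLin_apply, Matrix.mulVec, Matrix.mul_apply, dotProduct]
    have hAv : A.mulVec v = 0 := by
      funext k
      have : A.mulVec v k = ((A * M) * C) k y := by
        rw [Matrix.mul_assoc, Matrix.mul_apply]
        simp [Matrix.mulVec, dotProduct, hv]
      rw [this]
      exact hAMC k
    have := hinj v hvp hAv
    exact hxy (congrFun this x)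
  refine ⟨hsupp, ?_⟩
  -- rank of the collapse
  have hPr : (M * C).rank = 2 ^ r := by
    rw [Matrix.rank_mul_eq_left_of_isUnit_det C M ((Matrix.isUnit_iff_isUnit_det C).mp hC)]
    exact hMrank
  set P := M * C with hPdef
  -- spans of columns agree
  have hspan : Submodule.span ℂ (Set.range (collapseCols n t r P).transpose)
      = Submodule.span ℂ (Set.range P.transpose) := by
    apply le_antisymm
    · rw [Submodule.span_le]
      rintro _ ⟨z, rfl⟩
      apply Submodule.subset_span
      exact ⟨fun i => if h : (i : ℕ) < r then z ⟨i, h⟩ else true, rfl⟩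
    · rw [Submodule.span_le]
      rintro _ ⟨y, rfl⟩
      by_cases hgood : ∀ i : Fin t, r ≤ (i : ℕ) → y i = true
      · apply Submodule.subset_span
        refine ⟨fun j => y ⟨j, lt_of_lt_of_le j.isLt hr⟩, ?_⟩
        funext x
        show P x _ = P x y
        congr 1
        funext i
        by_cases h : (i : ℕ) < r
        · simp [h]
        · simp only [h, dif_neg, not_false_iff]
          exact (hgood i (le_of_not_gt h)).symm
      · have : P.transpose y = 0 := by
          funext x
          by_contra hx
          exact hgood (hsupp x y hx)
        rw [this]
        exact Submodule.zero_mem _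
  rw [Matrix.rank_eq_finrank_span_cols] at hPr ⊢
  change Module.finrank ℂ (Submodule.span ℂ (Set.range (collapseCols n t r P).transpose)) = 2 ^ r
  rw [hspan]
  exact hPr
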